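/- For every c > 0 and κ > 1 there exist constants 0 < c' ≤ C' (depending only on c, κ and the volume comparability constants) such that for all x, y ∈ M and all t > 0: c' ≤ V(x, t + d(x,y)) · (t + d(x,y))^{2(κ−1)} · ∫₀^∞ V(x,√u)^{−1} exp(−t²/(4u)) exp(−c d(x,y)²/u) u^{−κ} du ≤ C'. -/

import Mathlib

open MeasureTheory Metric Real Filter Set

lemma exp_le_fact_mul (ε s : ℝ) (hε : 0 < ε) (hs : 0 < s) (k : ℕ) :
    Real.exp (-ε / s) ≤ (k.factorial : ℝ) / ε ^ k * s ^ k := by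
  have h1 : (ε / s) ^ k / (k.factorial : ℝ) ≤ Real.exp (ε / s) := by
    calc (ε / s) ^ k / (k.factorial : ℝ)
        ≤ ∑ i ∈ Finset.range (k+1), (ε/s) ^ i / i.factorial := by
          exact Finset.single_le_sum (f := fun i => (ε/s)^i / i.factorial)
            (fun i _ => by positivity) (Finset.self_mem_range_succ k)
      _ ≤ Real.exp (ε / s) := Real.sum_le_exp_of_nonneg (by positivity) _
  have h2 : 0 < (ε/s)^k / (k.factorial : ℝ) := by positivity
  rw [neg_div, Real.exp_neg]
  calc (Real.exp (ε/s))⁻¹ ≤ ((ε/s)^k / (k.factorial : ℝ))⁻¹ := inv_anti₀ h2 h1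
    _ = (k.factorial : ℝ) / ε ^ k * s ^ k := by rw [div_pow]; field_simp

lemma aux_int {ε p : ℝ} (hε : 0 < ε) (hp : 1 < p) :
    IntegrableOn (fun s : ℝ => Real.exp (-ε / s) * s ^ (-p)) (Set.Ioi 0) := by
  have hmeas : Measurable (fun s : ℝ => Real.exp (-ε / s) * s ^ (-p)) := by
    fun_prop
  rw [← Set.Ioc_union_Ioi_eq_Ioi (zero_le_one (α := ℝ))]
  apply IntegrableOn.union
  · -- on Ioc 0 1
    set k := ⌈p⌉₊ with hk
    have hkp : p ≤ (k : ℝ) := Nat.le_ceil p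
    have hexp : (-1 : ℝ) < (k : ℝ) - p := by
      have : (1:ℝ) ≤ k := le_trans hp.le hkp
      linarith
    have hint : IntegrableOn (fun s : ℝ => (k.factorial : ℝ) / ε ^ k * s ^ ((k:ℝ) - p)) (Set.Ioc 0 1) := by
      apply Integrable.const_mul
      have := intervalIntegral.intervalIntegrable_rpow' (a := 0) (b := 1) hexp
      rwa [intervalIntegrable_iff_integrableOn_Ioc_of_le zero_le_one] at this
    apply Integrable.mono' hint hmeas.aestronglyMeasurable.restrict
    filter_upwards [ae_restrict_mem measurableSet_Ioc] with s hs
    have hs0 : 0 < s := hs.1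
    rw [Real.norm_eq_abs, abs_of_nonneg (by positivity)]
    calc Real.exp (-ε / s) * s ^ (-p) ≤ ((k.factorial : ℝ) / ε ^ k * s ^ k) * s ^ (-p) := by
          apply mul_le_mul_of_nonneg_right (exp_le_fact_mul ε s hε hs0 k) (by positivity)
      _ = (k.factorial : ℝ) / ε ^ k * s ^ ((k:ℝ) - p) := by
          rw [mul_assoc, ← Real.rpow_natCast s k, ← Real.rpow_add hs0, sub_eq_add_neg]
  · -- on Ioi 1
    apply Integrable.mono' (integrableOn_Ioi_rpow_of_lt (by linarith : -p < -1) one_pos)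
      hmeas.aestronglyMeasurable.restrict
    filter_upwards [ae_restrict_mem measurableSet_Ioi] with s hs
    have hs0 : (0:ℝ) < s := lt_trans one_pos hs
    rw [Real.norm_eq_abs, abs_of_nonneg (by positivity)]
    calc Real.exp (-ε / s) * s ^ (-p) ≤ 1 * s ^ (-p) := by
          apply mul_le_mul_of_nonneg_right _ (by positivity)
          rw [← Real.exp_zero]
          apply Real.exp_le_exp.2
          rw [neg_div]
          simp [le_of_lt, div_nonneg hε.le hs0.le]
      _ = s ^ (-p) := one_mul _

lemma num_bound {c t d : ℝ} (hc : 0 < c) (ht : 0 < t) (hd : 0 ≤ d) :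
    min (1/4) c / 2 * (t + d)^2 ≤ t^2/4 + c * d^2 := by
  rcases le_total (1/4 : ℝ) c with h | h
  · rw [min_eq_left h]
    nlinarith [sq_nonneg (t - d), mul_nonneg (by linarith : (0:ℝ) ≤ c - 1/4) (sq_nonneg d)]
  · rw [min_eq_right h]
    nlinarith [mul_nonneg hc.le (sq_nonneg (t - d)),
      mul_nonneg (by linarith : (0:ℝ) ≤ 1/4 - c) (sq_nonneg t)]

theorem stmt_3
    {M : Type*} [MetricSpace M] [MeasurableSpace M] [BorelSpace M]
    (μ : Measure M)
    (hVpos : ∀ (x : M) (r : ℝ), 0 < r → 0 < μ (ball x r))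
    (hVfin : ∀ (x : M) (r : ℝ), 0 < r → μ (ball x r) < ⊤)
    -- volume comparability
    (ν ν' c₀ C₀ : ℝ) (hν' : 0 < ν') (hνν : ν' ≤ ν) (hc₀ : 0 < c₀) (hc₀C₀ : c₀ ≤ C₀)
    (hdoub : ∀ (x : M) (r R : ℝ), 0 < r → r ≤ R →
        c₀ * (R/r) ^ ν' ≤ (μ (ball x R)).toReal / (μ (ball x r)).toReal ∧
        (μ (ball x R)).toReal / (μ (ball x r)).toReal ≤ C₀ * (R/r) ^ ν)
    (hcomp : ∀ (x y : M) (r : ℝ), 0 < r →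
        (μ (ball x r)).toReal ≤ C₀ * (1 + dist x y / r) ^ ν * (μ (ball y r)).toReal) :
    ∀ c : ℝ, 0 < c → ∀ κ : ℝ, 1 < κ →
      ∃ c' C' : ℝ, 0 < c' ∧ c' ≤ C' ∧ ∀ (x y : M) (t : ℝ), 0 < t →
        c' ≤ (μ (ball x (t + dist x y))).toReal * (t + dist x y) ^ (2*(κ-1)) *
              ∫ u in Set.Ioi (0:ℝ),
                ((μ (ball x (Real.sqrt u))).toReal)⁻¹ * Real.exp (-(t^2)/(4*u)) *
                  Real.exp (-c * (dist x y)^2 / u) * u ^ (-κ) ∧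
        (μ (ball x (t + dist x y))).toReal * (t + dist x y) ^ (2*(κ-1)) *
              (∫ u in Set.Ioi (0:ℝ),
                ((μ (ball x (Real.sqrt u))).toReal)⁻¹ * Real.exp (-(t^2)/(4*u)) *
                  Real.exp (-c * (dist x y)^2 / u) * u ^ (-κ)) ≤ C' := by
  intro c hc κ hκ
  have hC₀ : 0 < C₀ := lt_of_lt_of_le hc₀ hc₀C₀
  have hν : 0 < ν := lt_of_lt_of_le hν' hνν
  set ε : ℝ := min (1/4) c / 2 with hεdef
  have hε : 0 < ε := by
    have := lt_min (by norm_num : (0:ℝ) < 1/4) hc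
    positivity
  set G : ℝ → ℝ := fun s => (C₀ * s ^ (-(ν/2)) + c₀⁻¹) * (Real.exp (-ε / s) * s ^ (-κ))
    with hGdef
  have hGnonneg : ∀ s ∈ Set.Ioi (0:ℝ), 0 ≤ G s := by
    intro s hs
    have hs0 : (0:ℝ) < s := hs
    have h1 : 0 ≤ C₀ * s ^ (-(ν/2)) + c₀⁻¹ :=
      add_nonneg (mul_nonneg hC₀.le (Real.rpow_nonneg hs0.le _)) (inv_nonneg.2 hc₀.le)
    have h2 : 0 ≤ Real.exp (-ε / s) * s ^ (-κ) :=
      mul_nonneg (Real.exp_pos _).le (Real.rpow_nonneg hs0.le _)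
    exact mul_nonneg h1 h2
  have hGint : IntegrableOn G (Set.Ioi 0) := by
    have h1 : IntegrableOn (fun s : ℝ =>
        C₀ * (Real.exp (-ε / s) * s ^ (-(κ + ν/2))) + c₀⁻¹ * (Real.exp (-ε / s) * s ^ (-κ)))
        (Set.Ioi 0) :=
      ((aux_int hε (by linarith : 1 < κ + ν/2)).const_mul C₀).add
        ((aux_int hε hκ).const_mul c₀⁻¹)
    apply h1.congr_fun _ measurableSet_Ioi
    intro s hs
    have hs0 : (0:ℝ) < s := hs
    have hss : s ^ (-(κ + ν/2)) = s ^ (-(ν/2)) * s ^ (-κ) := by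
      rw [← Real.rpow_add hs0]; ring_nf
    rw [hGdef]; dsimp only; rw [hss]; ring
  set A : ℝ := ∫ s in Set.Ioi (0:ℝ), G s with hAdef
  have hA0 : 0 ≤ A := setIntegral_nonneg measurableSet_Ioi hGnonneg
  set c' : ℝ := Real.exp (-(1/4 + c)) * (2:ℝ) ^ (-κ) / (C₀ * (2:ℝ) ^ (ν/2)) with hc'def
  have hc'pos : 0 < c' := by
    have h1 : (0:ℝ) < (2:ℝ) ^ (-κ) := Real.rpow_pos_of_pos (by norm_num) _
    have h2 : (0:ℝ) < (2:ℝ) ^ (ν/2) := Real.rpow_pos_of_pos (by norm_num) _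
    rw [hc'def]; positivity
  refine ⟨c', A + c', hc'pos, by linarith, ?_⟩
  intro x y t ht
  set d : ℝ := dist x y with hddef
  have hd : 0 ≤ d := dist_nonneg
  set ρ : ℝ := t + d with hρdef
  have hρ : 0 < ρ := by positivity
  have hρ2 : (0:ℝ) < ρ^2 := by positivity
  -- rpow helpers
  have hpow2 : ∀ z : ℝ, ((ρ:ℝ)^2) ^ z = ρ ^ (2*z) := by
    intro z
    rw [← Real.rpow_two, ← Real.rpow_mul hρ.le]
  have hpowinv : ((ρ:ℝ)^2)⁻¹ = ρ ^ (-2:ℝ) := by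
    rw [show (-2:ℝ) = -(2:ℝ) by norm_num, Real.rpow_neg hρ.le, Real.rpow_two]
  set Vr : ℝ → ℝ := fun r => (μ (ball x r)).toReal with hVrdef
  have hVrnonneg : ∀ r : ℝ, 0 ≤ Vr r := fun r => ENNReal.toReal_nonneg
  have hVrpos : ∀ r : ℝ, 0 < r → 0 < Vr r := fun r hr =>
    ENNReal.toReal_pos (hVpos x r hr).ne' (hVfin x r hr).ne
  have hVrup : ∀ r R : ℝ, 0 < r → r ≤ R → Vr R ≤ C₀ * (R/r) ^ ν * Vr r := by
    intro r R hr hrR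
    have := (hdoub x r R hr hrR).2
    rwa [div_le_iff₀ (hVrpos r hr)] at this
  have hVrlo : ∀ r R : ℝ, 0 < r → r ≤ R → c₀ * (R/r) ^ ν' * Vr r ≤ Vr R := by
    intro r R hr hrR
    have := (hdoub x r R hr hrR).1
    rwa [le_div_iff₀ (hVrpos r hr)] at this
  set f : ℝ → ℝ := fun u => (Vr (Real.sqrt u))⁻¹ * Real.exp (-(t^2)/(4*u)) *
      Real.exp (-c * d^2 / u) * u ^ (-κ) with hfdef
  have hfnonneg : ∀ u ∈ Set.Ioi (0:ℝ), 0 ≤ f u := by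
    intro u hu
    have hu0 : (0:ℝ) < u := hu
    rw [hfdef]
    exact mul_nonneg (mul_nonneg (mul_nonneg (inv_nonneg.2 (hVrnonneg _))
      (Real.exp_pos _).le) (Real.exp_pos _).le) (Real.rpow_nonneg hu0.le (-κ))
  have hVmeas : Measurable Vr := by
    have hm : Monotone (fun r : ℝ => μ (ball x r)) := fun a b hab =>
      measure_mono (ball_subset_ball hab)
    exact ENNReal.measurable_toReal.comp hm.measurable
  have hfmeas : Measurable f := by
    apply Measurable.mul
    apply Measurable.mul
    apply Measurable.mul
    · exact (hVmeas.comp Real.continuous_sqrt.measurable).inv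
    · fun_prop
    · fun_prop
    · fun_prop
  set cst : ℝ := Vr ρ * ρ ^ (2*(κ-1)) with hcstdef
  have hcstpos : 0 < cst := by
    have h1 := hVrpos ρ hρ
    have h2 : (0:ℝ) < ρ ^ (2*(κ-1)) := Real.rpow_pos_of_pos hρ _
    rw [hcstdef]; positivity
  -- key pointwise upper bound
  have hup : ∀ u ∈ Set.Ioi (0:ℝ), cst * f u ≤ (ρ^2)⁻¹ * G (u / ρ^2) := by
    intro u hu
    have hu0 : (0:ℝ) < u := hu
    have hsu : 0 < Real.sqrt u := Real.sqrt_pos.2 hu0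
    have hs0 : 0 < u / ρ^2 := by positivity
    have ha : Vr ρ * (Vr (Real.sqrt u))⁻¹ ≤ C₀ * (u/ρ^2) ^ (-(ν/2)) + c₀⁻¹ := by
      have hx : 0 ≤ C₀ * (u/ρ^2) ^ (-(ν/2)) :=
        mul_nonneg hC₀.le (Real.rpow_nonneg hs0.le _)
      rw [← div_eq_mul_inv, div_le_iff₀ (hVrpos _ hsu)]
      rcases le_or_gt (Real.sqrt u) ρ with hcase | hcase
      · have h1 := hVrup (Real.sqrt u) ρ hsu hcase
        have he : (ρ / Real.sqrt u) ^ ν = (u/ρ^2) ^ (-(ν/2)) := by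
          have hb : (0:ℝ) < ρ / Real.sqrt u := by positivity
          have h2 : ((ρ / Real.sqrt u) ^ (2:ℝ)) = (u/ρ^2)⁻¹ := by
            rw [Real.rpow_two, div_pow, Real.sq_sqrt hu0.le, inv_div]
          calc (ρ / Real.sqrt u) ^ ν = ((ρ / Real.sqrt u) ^ (2:ℝ)) ^ (ν/2) := by
                rw [← Real.rpow_mul hb.le, show (2:ℝ)*(ν/2) = ν by ring]
            _ = ((u/ρ^2)⁻¹) ^ (ν/2) := by rw [h2]
            _ = (u/ρ^2) ^ (-(ν/2)) := by
                rw [← Real.rpow_neg_one (u/ρ^2), ← Real.rpow_mul hs0.le]; ring_nf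
        calc Vr ρ ≤ C₀ * (ρ / Real.sqrt u) ^ ν * Vr (Real.sqrt u) := h1
          _ = C₀ * (u/ρ^2) ^ (-(ν/2)) * Vr (Real.sqrt u) := by rw [he]
          _ ≤ (C₀ * (u/ρ^2) ^ (-(ν/2)) + c₀⁻¹) * Vr (Real.sqrt u) := by
              apply mul_le_mul_of_nonneg_right _ (hVrnonneg _)
              have : (0:ℝ) ≤ c₀⁻¹ := inv_nonneg.2 hc₀.le
              linarith
      · have h1 := hVrlo ρ (Real.sqrt u) hρ hcase.le
        have h2 : (1:ℝ) ≤ (Real.sqrt u / ρ) ^ ν' :=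
          Real.one_le_rpow ((one_le_div hρ).2 hcase.le) hν'.le
        calc Vr ρ = c₀⁻¹ * (c₀ * 1 * Vr ρ) := by field_simp
          _ ≤ c₀⁻¹ * (c₀ * (Real.sqrt u / ρ) ^ ν' * Vr ρ) := by
              apply mul_le_mul_of_nonneg_left _ (inv_nonneg.2 hc₀.le)
              apply mul_le_mul_of_nonneg_right _ (hVrnonneg _)
              apply mul_le_mul_of_nonneg_left h2 hc₀.le
          _ ≤ c₀⁻¹ * Vr (Real.sqrt u) :=
              mul_le_mul_of_nonneg_left h1 (inv_nonneg.2 hc₀.le)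
          _ ≤ (C₀ * (u/ρ^2) ^ (-(ν/2)) + c₀⁻¹) * Vr (Real.sqrt u) := by
              apply mul_le_mul_of_nonneg_right _ (hVrnonneg _)
              linarith
    have hb : Real.exp (-(t^2)/(4*u)) * Real.exp (-c * d^2 / u) ≤ Real.exp (-ε / (u/ρ^2)) := by
      rw [← Real.exp_add]
      apply Real.exp_le_exp.2
      have hnum : ε * ρ^2 ≤ t^2/4 + c * d^2 := by
        rw [hρdef, hεdef]
        exact num_bound hc ht hd
      have heq : -ε / (u/ρ^2) = (-(ε * ρ^2))/u := by
        rw [div_div_eq_mul_div, neg_mul]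
      rw [heq, show -(t^2)/(4*u) = (-(t^2)/4)/u by rw [div_div], ← add_div,
        div_le_div_iff_of_pos_right hu0]
      linarith
    have e2 : (ρ^2)⁻¹ * (u/ρ^2) ^ (-κ) = ρ ^ (2*(κ-1)) * u ^ (-κ) := by
      rw [Real.div_rpow hu0.le hρ2.le, Real.rpow_neg hρ2.le κ, div_eq_mul_inv, inv_inv, hpow2,
        hpowinv]
      rw [show (ρ ^ (-2:ℝ) * (u ^ (-κ) * ρ ^ (2*κ))) = (ρ ^ (-2:ℝ) * ρ ^ (2*κ)) * u ^ (-κ) by ring,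
        ← Real.rpow_add hρ]
      congr 1
      congr 1
      ring
    calc cst * f u
        = (Vr ρ * (Vr (Real.sqrt u))⁻¹) * (Real.exp (-(t^2)/(4*u)) * Real.exp (-c*d^2/u)) *
            (ρ ^ (2*(κ-1)) * u ^ (-κ)) := by rw [hcstdef, hfdef]; ring
      _ ≤ (C₀ * (u/ρ^2) ^ (-(ν/2)) + c₀⁻¹) * (Real.exp (-ε/(u/ρ^2))) *
            ((ρ^2)⁻¹ * (u/ρ^2) ^ (-κ)) := by
          rw [e2]
          apply mul_le_mul_of_nonneg_right _ (by positivity)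
          apply mul_le_mul ha hb (by positivity)
          exact add_nonneg (mul_nonneg hC₀.le (Real.rpow_nonneg hs0.le _))
            (inv_nonneg.2 hc₀.le)
      _ = (ρ^2)⁻¹ * G (u/ρ^2) := by rw [hGdef]; dsimp only; ring
  -- integrability of the scaled majorant and of f
  have hGcomp_int : IntegrableOn (fun u : ℝ => G (u/ρ^2)) (Set.Ioi 0) := by
    have h := (integrableOn_Ioi_comp_mul_right_iff G 0 (inv_pos.2 hρ2)).2
      (by simpa using hGint)
    simpa [div_eq_mul_inv] using h
  have hfint : IntegrableOn f (Set.Ioi 0) := by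
    apply Integrable.mono' ((hGcomp_int.const_mul ((ρ^2)⁻¹)).const_mul cst⁻¹)
      hfmeas.aestronglyMeasurable.restrict
    filter_upwards [ae_restrict_mem measurableSet_Ioi] with u hu
    rw [Real.norm_eq_abs, abs_of_nonneg (hfnonneg u hu)]
    calc f u = cst⁻¹ * (cst * f u) := by
          rw [← mul_assoc, inv_mul_cancel₀ hcstpos.ne', one_mul]
      _ ≤ cst⁻¹ * ((ρ^2)⁻¹ * G (u/ρ^2)) :=
          mul_le_mul_of_nonneg_left (hup u hu) (inv_nonneg.2 hcstpos.le)
  -- upper bound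
  have hupper_int : ∫ u in Set.Ioi (0:ℝ), (ρ^2)⁻¹ * G (u/ρ^2) = A := by
    rw [integral_const_mul]
    have h := integral_comp_mul_right_Ioi G 0 (inv_pos.2 hρ2)
    simp only [zero_mul, inv_inv, smul_eq_mul] at h
    rw [show (fun u : ℝ => G (u/ρ^2)) = fun u : ℝ => G (u * (ρ^2)⁻¹) from
      funext fun u => by rw [div_eq_mul_inv], h, ← mul_assoc,
      inv_mul_cancel₀ hρ2.ne', one_mul]
  have hIub : cst * (∫ u in Set.Ioi (0:ℝ), f u) ≤ A := by
    rw [← integral_const_mul, ← hupper_int]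
    apply integral_mono_of_nonneg
    · exact (ae_restrict_iff' measurableSet_Ioi).2 (Eventually.of_forall fun u hu =>
        mul_nonneg hcstpos.le (hfnonneg u hu))
    · exact hGcomp_int.const_mul _
    · exact (ae_restrict_iff' measurableSet_Ioi).2 (Eventually.of_forall hup)
  -- lower bound
  have hsub : Set.Ioc (ρ^2) (2*ρ^2) ⊆ Set.Ioi (0:ℝ) := fun u hu => lt_trans hρ2 hu.1
  have hlow_pt : ∀ u ∈ Set.Ioc (ρ^2) (2*ρ^2),
      (C₀ * (2:ℝ)^(ν/2) * Vr ρ)⁻¹ * Real.exp (-(1/4+c)) * (2*ρ^2)^(-κ) ≤ f u := by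
    intro u hu
    have hu0 : (0:ℝ) < u := lt_trans hρ2 hu.1
    have hsu : 0 < Real.sqrt u := Real.sqrt_pos.2 hu0
    have hρu : ρ ≤ Real.sqrt u := by
      rw [show ρ = Real.sqrt (ρ^2) from (Real.sqrt_sq hρ.le).symm]
      exact Real.sqrt_le_sqrt hu.1.le
    have hsu2 : Real.sqrt u ≤ Real.sqrt 2 * ρ := by
      rw [show Real.sqrt 2 * ρ = Real.sqrt (2*ρ^2) by
        rw [Real.sqrt_mul (by norm_num), Real.sqrt_sq hρ.le]]
      exact Real.sqrt_le_sqrt hu.2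
    have hi : (C₀ * (2:ℝ)^(ν/2) * Vr ρ)⁻¹ ≤ (Vr (Real.sqrt u))⁻¹ := by
      apply inv_anti₀ (hVrpos _ hsu)
      calc Vr (Real.sqrt u) ≤ C₀ * (Real.sqrt u / ρ)^ν * Vr ρ := hVrup ρ (Real.sqrt u) hρ hρu
        _ ≤ C₀ * (2:ℝ)^(ν/2) * Vr ρ := by
            apply mul_le_mul_of_nonneg_right _ (hVrnonneg _)
            apply mul_le_mul_of_nonneg_left _ hC₀.le
            calc (Real.sqrt u / ρ)^ν ≤ (Real.sqrt 2)^ν := by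
                  apply Real.rpow_le_rpow (by positivity) _ hν.le
                  rw [div_le_iff₀ hρ]; exact hsu2
              _ = (2:ℝ)^(ν/2) := by
                  rw [Real.sqrt_eq_rpow, ← Real.rpow_mul (by norm_num : (0:ℝ) ≤ 2)]
                  ring_nf
    have htρ : t ≤ ρ := by rw [hρdef]; linarith
    have hdρ : d ≤ ρ := by rw [hρdef]; linarith
    have hii : Real.exp (-(1/4 : ℝ)) ≤ Real.exp (-(t^2)/(4*u)) := by
      apply Real.exp_le_exp.2
      rw [neg_div, neg_le_neg_iff, div_le_iff₀ (by positivity : (0:ℝ) < 4*u)]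
      have h1 : t^2 ≤ ρ^2 := pow_le_pow_left₀ ht.le htρ 2
      linarith [hu.1]
    have hiii : Real.exp (-c) ≤ Real.exp (-c * d^2 / u) := by
      apply Real.exp_le_exp.2
      rw [show -c * d^2 / u = -(c * d^2 / u) by ring, neg_le_neg_iff,
        div_le_iff₀ hu0]
      have h2 : d^2 ≤ ρ^2 := pow_le_pow_left₀ hd hdρ 2
      have h3 : d^2 ≤ u := by linarith [hu.1]
      exact mul_le_mul_of_nonneg_left h3 hc.le
    have hiv : (2*ρ^2)^(-κ) ≤ u ^ (-κ) :=
      Real.rpow_le_rpow_of_nonpos hu0 hu.2 (by linarith)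
    rw [hfdef]
    calc (C₀ * (2:ℝ)^(ν/2) * Vr ρ)⁻¹ * Real.exp (-(1/4+c)) * (2*ρ^2)^(-κ)
        = (C₀ * (2:ℝ)^(ν/2) * Vr ρ)⁻¹ * Real.exp (-(1/4:ℝ)) * Real.exp (-c) * (2*ρ^2)^(-κ) := by
          rw [show (-(1/4+c) : ℝ) = -(1/4:ℝ) + -c by ring, Real.exp_add]; ring
      _ ≤ (Vr (Real.sqrt u))⁻¹ * Real.exp (-(t^2)/(4*u)) * Real.exp (-c*d^2/u) * u ^ (-κ) := by
          have hA1 : (0:ℝ) ≤ (C₀ * (2:ℝ)^(ν/2) * Vr ρ)⁻¹ := by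
            have : (0:ℝ) < (2:ℝ)^(ν/2) := Real.rpow_pos_of_pos (by norm_num) _
            have := hVrpos ρ hρ
            positivity
          apply mul_le_mul _ hiv (Real.rpow_nonneg (by positivity) _)
          · exact mul_nonneg (mul_nonneg (inv_nonneg.2 (hVrnonneg _)) (Real.exp_pos _).le)
              (Real.exp_pos _).le
          apply mul_le_mul _ hiii (Real.exp_pos _).le
          · exact mul_nonneg (inv_nonneg.2 (hVrnonneg _)) (Real.exp_pos _).le
          exact mul_le_mul hi hii (Real.exp_pos _).le (inv_nonneg.2 (hVrnonneg _))
  have hlow : c' ≤ cst * ∫ u in Set.Ioi (0:ℝ), f u := by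
    have h1 : ∫ u in Set.Ioc (ρ^2) (2*ρ^2), f u ≤ ∫ u in Set.Ioi (0:ℝ), f u :=
      setIntegral_mono_set hfint ((ae_restrict_iff' measurableSet_Ioi).2
        (Eventually.of_forall hfnonneg)) (HasSubset.Subset.eventuallyLE hsub)
    have h2 : (C₀ * (2:ℝ)^(ν/2) * Vr ρ)⁻¹ * Real.exp (-(1/4+c)) * (2*ρ^2)^(-κ) * ρ^2 ≤
        ∫ u in Set.Ioc (ρ^2) (2*ρ^2), f u := by
      have h := setIntegral_ge_of_const_le measurableSet_Ioc
        (by rw [Real.volume_Ioc]; exact ENNReal.ofReal_ne_top) hlow_pt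
        (hfint.mono_set hsub)
      rw [Real.volume_real_Ioc_of_le (by linarith [sq_nonneg ρ]), smul_eq_mul] at h
      calc (C₀ * (2:ℝ)^(ν/2) * Vr ρ)⁻¹ * Real.exp (-(1/4+c)) * (2*ρ^2)^(-κ) * ρ^2
          = (C₀ * (2:ℝ)^(ν/2) * Vr ρ)⁻¹ * Real.exp (-(1/4+c)) * (2*ρ^2)^(-κ) *
              (2*ρ^2 - ρ^2) := by ring_nf
        _ ≤ _ := by linarith
    have hkey : cst * ((C₀ * (2:ℝ)^(ν/2) * Vr ρ)⁻¹ * Real.exp (-(1/4+c)) * (2*ρ^2)^(-κ) * ρ^2)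
        = c' := by
      have h2ν : (0:ℝ) < (2:ℝ)^(ν/2) := Real.rpow_pos_of_pos (by norm_num) _
      have hV := hVrpos ρ hρ
      have hsplit : ((2:ℝ)*ρ^2)^(-κ) = (2:ℝ)^(-κ) * (ρ^2)^(-κ) :=
        Real.mul_rpow (by norm_num) hρ2.le
      have hpows : ρ ^ (2*(κ-1)) * ((ρ^2:ℝ) ^ (-κ) * ρ^2) = 1 := by
        rw [hpow2, show (ρ:ℝ)^2 = ρ ^ (2:ℝ) from (Real.rpow_two ρ).symm,
          ← Real.rpow_add hρ, ← Real.rpow_add hρ]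
        rw [show 2*(κ-1) + (2 * -κ + 2) = 0 by ring, Real.rpow_zero]
      have hfrac : Vr ρ * (C₀ * (2:ℝ)^(ν/2) * Vr ρ)⁻¹ = (C₀ * (2:ℝ)^(ν/2))⁻¹ := by
        rw [mul_inv, mul_comm ((C₀ * (2:ℝ)^(ν/2))⁻¹) ((Vr ρ)⁻¹), ← mul_assoc,
          mul_inv_cancel₀ hV.ne', one_mul]
      calc cst * ((C₀ * (2:ℝ)^(ν/2) * Vr ρ)⁻¹ * Real.exp (-(1/4+c)) * (2*ρ^2)^(-κ) * ρ^2)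
          = (Vr ρ * (C₀ * (2:ℝ)^(ν/2) * Vr ρ)⁻¹) * Real.exp (-(1/4+c)) * (2:ℝ)^(-κ) *
              (ρ ^ (2*(κ-1)) * ((ρ^2:ℝ) ^ (-κ) * ρ^2)) := by
            rw [hcstdef, hsplit]; ring
        _ = (C₀ * (2:ℝ)^(ν/2))⁻¹ * Real.exp (-(1/4+c)) * (2:ℝ)^(-κ) := by
            rw [hfrac, hpows, mul_one]
        _ = c' := by rw [hc'def]; field_simp
    calc c' = cst * ((C₀ * (2:ℝ)^(ν/2) * Vr ρ)⁻¹ * Real.exp (-(1/4+c)) * (2*ρ^2)^(-κ) * ρ^2) :=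
          hkey.symm
      _ ≤ cst * ∫ u in Set.Ioi (0:ℝ), f u :=
          mul_le_mul_of_nonneg_left (h2.trans h1) hcstpos.le
  exact ⟨hlow, le_trans hIub (by linarith)⟩
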